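/- arXiv:1910.14289 — 4 statements merged into one kernel-verified Lean document; each statement's English description precedes it below -/
import Mathlib

section
/- For λ > 0, λ·∫₀^∞ ∫_{π/3}^{2π/3} e^{-(λ/√3)·r²·sin²φ} · r² dφ dr = (1/√λ) · (1/2) · 3^{-1/4} · √π · (1 + (3/4)·ln 3). -/
open Real MeasureTheory

lemma lemA {b : ℝ} (hb : 0 < b) :
    ∫ r in Set.Ioi (0:ℝ), Real.exp (-b * r^2) * r^2
      = b ^ (-(3:ℝ)/2) * (Real.sqrt π / 4) := by
  have h := integral_rpow_mul_exp_neg_mul_rpow (p := 2) (q := 2) two_pos (by norm_num) hb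
  have heq : ∀ x ∈ Set.Ioi (0:ℝ),
      x ^ (2:ℝ) * Real.exp (-b * x ^ (2:ℝ)) = Real.exp (-b * x^2) * x^2 := by
    intro x hx
    rw [show (x:ℝ) ^ (2:ℝ) = x ^ 2 by
      rw [show ((2:ℝ)) = ((2:ℕ):ℝ) by norm_num, Real.rpow_natCast]]
    ring
  rw [setIntegral_congr_fun measurableSet_Ioi heq] at h
  rw [h, show ((2:ℝ)+1)/2 = 1/2 + 1 by norm_num, Real.Gamma_add_one (by norm_num),
    Real.Gamma_one_half_eq]
  rw [show (-((2:ℝ)+1)/2) = -(3:ℝ)/2 by norm_num]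
  ring

noncomputable def Fcsc (φ : ℝ) : ℝ :=
  -Real.cos φ / (2 * Real.sin φ ^ 2)
    + 1/4 * (Real.log (1 - Real.cos φ) - Real.log (1 + Real.cos φ))

lemma hasDeriv_Fcsc {φ : ℝ} (h0 : 0 < φ) (hπ : φ < π) :
    HasDerivAt Fcsc ((Real.sin φ ^ 3)⁻¹) φ := by
  have hs : 0 < Real.sin φ := Real.sin_pos_of_pos_of_lt_pi h0 hπ
  have hc1 : Real.cos φ < 1 := by
    have := Real.sin_sq_add_cos_sq φ; nlinarith
  have hc2 : -1 < Real.cos φ := by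
    have := Real.sin_sq_add_cos_sq φ; nlinarith
  have hd1 : HasDerivAt (fun φ => -Real.cos φ / (2 * Real.sin φ ^ 2))
      ((Real.sin φ * (2 * Real.sin φ ^ 2) - (-Real.cos φ) * (2 * (2 * Real.sin φ * Real.cos φ)))
        / (2 * Real.sin φ ^ 2)^2) φ := by
    exact HasDerivAt.div ((Real.hasDerivAt_cos φ).neg.congr_deriv (by ring))
      (((Real.hasDerivAt_sin φ).pow 2).const_mul 2 |>.congr_deriv (by ring))
      (by positivity)
  have hd2 : HasDerivAt (fun φ => Real.log (1 - Real.cos φ))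
      (Real.sin φ / (1 - Real.cos φ)) φ := by
    have : HasDerivAt (fun φ => 1 - Real.cos φ) (Real.sin φ) φ :=
      ((Real.hasDerivAt_cos φ).const_sub 1).congr_deriv (by ring)
    exact this.log (by linarith)
  have hd3 : HasDerivAt (fun φ => Real.log (1 + Real.cos φ))
      ((-Real.sin φ) / (1 + Real.cos φ)) φ := by
    have : HasDerivAt (fun φ => 1 + Real.cos φ) (-Real.sin φ) φ :=
      (Real.hasDerivAt_cos φ).const_add 1
    exact this.log (by linarith)
  have := hd1.add (((hd2.sub hd3).const_mul (1/4)))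
  refine (this : HasDerivAt Fcsc _ φ).congr_deriv ?_
  symm
  have hpyth := Real.sin_sq_add_cos_sq φ
  have hsne : Real.sin φ ≠ 0 := ne_of_gt hs
  have h1ne : (1 - Real.cos φ) ≠ 0 := by linarith
  have h2ne : (1 + Real.cos φ) ≠ 0 := by linarith
  field_simp
  linear_combination (8 * Real.cos φ^2 - 8 - 4 * Real.sin φ^2) * hpyth

lemma lemB : ∫ φ in (π/3)..(2*π/3), (Real.sin φ ^ 3)⁻¹ = 2/3 + 1/2 * Real.log 3 := by
  have hle : π/3 ≤ 2*π/3 := by linarith [Real.pi_pos]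
  have key : ∀ φ ∈ Set.uIcc (π/3) (2*π/3), HasDerivAt Fcsc ((Real.sin φ ^ 3)⁻¹) φ := by
    intro φ hφ
    rw [Set.uIcc_of_le hle] at hφ
    exact hasDeriv_Fcsc (by linarith [Real.pi_pos, hφ.1]) (by linarith [Real.pi_pos, hφ.2])
  have hcont : ContinuousOn (fun φ => (Real.sin φ ^ 3)⁻¹) (Set.uIcc (π/3) (2*π/3)) := by
    apply ContinuousOn.inv₀ (by fun_prop)
    intro φ hφ
    rw [Set.uIcc_of_le hle] at hφ
    have : 0 < Real.sin φ := Real.sin_pos_of_pos_of_lt_pi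
      (by linarith [Real.pi_pos, hφ.1]) (by linarith [Real.pi_pos, hφ.2])
    positivity
  rw [intervalIntegral.integral_eq_sub_of_hasDerivAt key (hcont.intervalIntegrable)]
  have h1 : Real.cos (2*π/3) = -(1/2) := by
    rw [show (2*π/3 : ℝ) = π - π/3 by ring, Real.cos_pi_sub, Real.cos_pi_div_three]
  have h2 : Real.sin (2*π/3) = Real.sqrt 3 / 2 := by
    rw [show (2*π/3 : ℝ) = π - π/3 by ring, Real.sin_pi_sub, Real.sin_pi_div_three]
  have h3 : (Real.sqrt 3 / 2)^2 = 3/4 := by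
    rw [div_pow, Real.sq_sqrt (by norm_num : (3:ℝ) ≥ 0)]; norm_num
  simp only [Fcsc, h1, h2, h3, Real.cos_pi_div_three, Real.sin_pi_div_three]
  rw [show (1 - -(1/2) : ℝ) = 3/2 by norm_num, show (1 + -(1/2) : ℝ) = 1/2 by norm_num,
    show (1 - 1/2 : ℝ) = 1/2 by norm_num, show (1 + 1/2 : ℝ) = 3/2 by norm_num,
    show (3/2 : ℝ) = 3 * (1/2) by norm_num, Real.log_mul (by norm_num) (by norm_num)]
  ring

lemma sin_sq_ge {φ : ℝ} (h1 : π/3 ≤ φ) (h2 : φ ≤ 2*π/3) : 3/4 ≤ Real.sin φ ^ 2 := by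
  have hπ := Real.pi_pos
  have hcle : Real.cos φ ≤ Real.cos (π/3) :=
    Real.cos_le_cos_of_nonneg_of_le_pi (by linarith) (by linarith) h1
  have hcge : Real.cos (2*π/3) ≤ Real.cos φ :=
    Real.cos_le_cos_of_nonneg_of_le_pi (by linarith) (by linarith) h2
  rw [Real.cos_pi_div_three] at hcle
  rw [show (2*π/3 : ℝ) = π - π/3 by ring, Real.cos_pi_sub, Real.cos_pi_div_three] at hcge
  have := Real.sin_sq_add_cos_sq φ
  nlinarith

theorem stmt_4 (l : ℝ) (hl : 0 < l) :
    l * ∫ r in Set.Ioi (0:ℝ), ∫ φ in (π/3)..(2*π/3),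
        Real.exp (-(l / Real.sqrt 3) * r^2 * Real.sin φ ^ 2) * r^2
      = 1 / Real.sqrt l * (1/2) * (3:ℝ) ^ (-(1/4) : ℝ) * Real.sqrt π
          * (1 + 3/4 * Real.log 3) := by
  have hπ := Real.pi_pos
  set c : ℝ := l / Real.sqrt 3 with hc
  have hcpos : 0 < c := div_pos hl (Real.sqrt_pos.mpr (by norm_num))
  have hle : π/3 ≤ 2*π/3 := by linarith
  -- rewrite inner interval integral as a set integral
  have step1 : (∫ r in Set.Ioi (0:ℝ), ∫ φ in (π/3)..(2*π/3),
        Real.exp (-c * r^2 * Real.sin φ ^ 2) * r^2)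
      = ∫ r in Set.Ioi (0:ℝ), ∫ φ in Set.Ioc (π/3) (2*π/3),
        Real.exp (-c * r^2 * Real.sin φ ^ 2) * r^2 := by
    simp_rw [intervalIntegral.integral_of_le hle]
  -- integrability on the product
  have hFint : IntegrableOn (fun r : ℝ => Real.exp (-(3/4*c) * r^2) * r^2)
      (Set.Ioi (0:ℝ)) volume := by
    have h := (integrable_rpow_mul_exp_neg_mul_sq (by positivity : (0:ℝ) < 3/4*c)
      (by norm_num : (-1:ℝ) < 2)).integrableOn (s := Set.Ioi (0:ℝ))
    apply h.congr_fun _ measurableSet_Ioi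
    intro x hx
    have hx2 : (x:ℝ) ^ (2:ℝ) = x ^ 2 := by
      rw [show ((2:ℝ)) = ((2:ℕ):ℝ) by norm_num, Real.rpow_natCast]
    simp only [hx2]
    ring
  have hint : Integrable (Function.uncurry
      (fun r φ : ℝ => Real.exp (-c * r^2 * Real.sin φ ^ 2) * r^2))
      ((volume.restrict (Set.Ioi (0:ℝ))).prod
        (volume.restrict (Set.Ioc (π/3) (2*π/3)))) := by
    have hGint : Integrable (fun _ : ℝ => (1:ℝ))
        (volume.restrict (Set.Ioc (π/3) (2*π/3))) :=
      integrableOn_const measure_Ioc_lt_top.ne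
    have hbigint := hFint.mul_prod hGint
    apply Integrable.mono' hbigint
    · apply Continuous.aestronglyMeasurable
      apply Continuous.mul _ (by fun_prop)
      apply Real.continuous_exp.comp
      fun_prop
    · rw [Measure.prod_restrict]
      rw [ae_restrict_iff' (measurableSet_Ioi.prod measurableSet_Ioc)]
      filter_upwards with p hp
      obtain ⟨hr, hφ⟩ := hp
      simp only [Function.uncurry, Real.norm_eq_abs, mul_one]
      rw [abs_of_nonneg (by positivity)]
      have hsin := sin_sq_ge (le_of_lt hφ.1) hφ.2
      have hexp : Real.exp (-c * p.1^2 * Real.sin p.2 ^ 2)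
          ≤ Real.exp (-(3/4*c) * p.1^2) := by
        apply Real.exp_le_exp.mpr
        nlinarith [mul_nonneg (mul_nonneg (sub_nonneg.mpr hsin) hcpos.le) (sq_nonneg p.1)]
      exact mul_le_mul_of_nonneg_right hexp (sq_nonneg p.1)
  -- swap the integrals
  have step2 : (∫ r in Set.Ioi (0:ℝ), ∫ φ in Set.Ioc (π/3) (2*π/3),
        Real.exp (-c * r^2 * Real.sin φ ^ 2) * r^2)
      = ∫ φ in Set.Ioc (π/3) (2*π/3), ∫ r in Set.Ioi (0:ℝ),
        Real.exp (-c * r^2 * Real.sin φ ^ 2) * r^2 :=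
    integral_integral_swap hint
  -- evaluate inner r-integral
  have step3 : (∫ φ in Set.Ioc (π/3) (2*π/3), ∫ r in Set.Ioi (0:ℝ),
        Real.exp (-c * r^2 * Real.sin φ ^ 2) * r^2)
      = ∫ φ in Set.Ioc (π/3) (2*π/3),
          c ^ (-(3:ℝ)/2) * (Real.sqrt π / 4) * (Real.sin φ ^ 3)⁻¹ := by
    apply setIntegral_congr_fun measurableSet_Ioc
    intro φ hφ
    dsimp only
    have hsin : 0 < Real.sin φ :=
      Real.sin_pos_of_pos_of_lt_pi (by linarith [hφ.1]) (by linarith [hφ.2])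
    have hb : 0 < c * Real.sin φ ^ 2 := by positivity
    have : (∫ r in Set.Ioi (0:ℝ), Real.exp (-c * r^2 * Real.sin φ ^ 2) * r^2)
        = ∫ r in Set.Ioi (0:ℝ), Real.exp (-(c * Real.sin φ ^ 2) * r^2) * r^2 := by
      congr 1; funext r; ring_nf
    rw [this, lemA hb, Real.mul_rpow hcpos.le (sq_nonneg _)]
    have hps : (Real.sin φ ^ 2 : ℝ) ^ (-(3:ℝ)/2) = (Real.sin φ ^ 3)⁻¹ := by
      rw [← Real.rpow_natCast (Real.sin φ) 2, ← Real.rpow_mul hsin.le,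
        show ((2:ℕ):ℝ) * (-(3:ℝ)/2) = -(3:ℝ) by norm_num,
        Real.rpow_neg hsin.le, show (3:ℝ) = ((3:ℕ):ℝ) by norm_num, Real.rpow_natCast]
    rw [hps]; ring
  -- evaluate φ-integral
  have step4 : (∫ φ in Set.Ioc (π/3) (2*π/3),
          c ^ (-(3:ℝ)/2) * (Real.sqrt π / 4) * (Real.sin φ ^ 3)⁻¹)
      = c ^ (-(3:ℝ)/2) * (Real.sqrt π / 4) * (2/3 + 1/2 * Real.log 3) := by
    rw [MeasureTheory.integral_const_mul, ← intervalIntegral.integral_of_le hle, lemB]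
  rw [step1, step2, step3, step4]
  -- final algebra
  have e1 : c ^ (-(3:ℝ)/2) = l ^ (-(3:ℝ)/2) * (3:ℝ) ^ ((3:ℝ)/4) := by
    rw [hc, Real.div_rpow hl.le (Real.sqrt_nonneg 3), Real.sqrt_eq_rpow]
    rw [← Real.rpow_mul (by norm_num : (0:ℝ) ≤ 3)]
    rw [show ((1:ℝ)/2) * (-(3:ℝ)/2) = -((3:ℝ)/4) by norm_num,
      Real.rpow_neg (by norm_num : (0:ℝ) ≤ 3)]
    rw [div_eq_mul_inv, inv_inv]
  have e2 : l * l ^ (-(3:ℝ)/2) = 1 / Real.sqrt l := by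
    nth_rewrite 1 [← Real.rpow_one l]
    rw [← Real.rpow_add hl, show (1:ℝ) + -(3:ℝ)/2 = -(1/2) by norm_num,
      Real.rpow_neg hl.le, ← Real.sqrt_eq_rpow, one_div]
  have e3 : (3:ℝ) ^ ((3:ℝ)/4) = (3:ℝ) ^ (-(1/4):ℝ) * 3 := by
    rw [show ((3:ℝ)/4 : ℝ) = -(1/4) + 1 by norm_num,
      Real.rpow_add (by norm_num : (0:ℝ) < 3), Real.rpow_one]
  rw [e1, e3]
  calc l * (l ^ (-(3:ℝ)/2) * ((3:ℝ) ^ (-(1/4):ℝ) * 3) * (Real.sqrt π / 4)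
        * (2/3 + 1/2 * Real.log 3))
      = (l * l ^ (-(3:ℝ)/2)) * ((3:ℝ) ^ (-(1/4):ℝ) * 3 * (Real.sqrt π / 4)
        * (2/3 + 1/2 * Real.log 3)) := by ring
    _ = _ := by rw [e2]; ring
end

section
/- For λ > 0, λ·∫₀^∞ ∫_{π/3}^{2π/3} e^{-(λ/√3)·r²·sin²φ} · r² · sin φ dφ dr = (1/√λ) · (1/2) · 3^{1/4} · √π. -/
open Real MeasureTheory Set

theorem stmt_5 (l : ℝ) (hl : 0 < l) :
    l * ∫ r in Set.Ioi (0:ℝ), ∫ φ in (π/3)..(2*π/3),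
        Real.exp (-(l / Real.sqrt 3) * r^2 * Real.sin φ ^ 2) * r^2 * Real.sin φ
      = 1 / Real.sqrt l * (1/2) * (3:ℝ) ^ ((1:ℝ)/4) * Real.sqrt π := by
  have hpi := pi_pos
  have h3 : (0:ℝ) < Real.sqrt 3 := by positivity
  have hcpos : 0 < l / Real.sqrt 3 := by positivity
  set c : ℝ := l / Real.sqrt 3 with hc
  have hab : (π/3 : ℝ) ≤ 2*π/3 := by linarith
  -- sin lower bound
  have hsin : ∀ φ ∈ Set.Icc (π/3) (2*π/3), Real.sqrt 3 / 2 ≤ Real.sin φ := by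
    intro φ hφ
    obtain ⟨h1, h2⟩ := hφ
    rw [← Real.cos_sub_pi_div_two φ, ← Real.cos_abs]
    calc Real.sqrt 3 / 2 = Real.cos (π/6) := Real.cos_pi_div_six.symm
    _ ≤ Real.cos |φ - π/2| := by
        apply Real.cos_le_cos_of_nonneg_of_le_pi (abs_nonneg _) (by linarith)
        rw [abs_le]; constructor <;> linarith
  -- piece A : radial integral
  have pieceA : ∀ d : ℝ, 0 < d → ∫ r in Ioi (0:ℝ), Real.exp (-d * r^2) * r^2
      = d ^ (-(3:ℝ)/2) * (Real.sqrt π / 4) := by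
    intro d hd
    have h := integral_rpow_mul_exp_neg_mul_rpow (p := 2) (q := 2) (b := d)
      two_pos (by norm_num) hd
    have heq : ∀ x : ℝ, x ^ (2:ℝ) * Real.exp (-d * x ^ (2:ℝ)) = Real.exp (-d * x^2) * x^2 := by
      intro x
      rw [show ((2:ℝ) = ((2:ℕ):ℝ)) by norm_num, Real.rpow_natCast]
      ring_nf
    simp_rw [heq] at h
    rw [h, show ((2+1)/2 : ℝ) = 1/2 + 1 by norm_num, Real.Gamma_add_one (by norm_num),
      Real.Gamma_one_half_eq, show (-(2+1)/2 : ℝ) = -(3:ℝ)/2 by norm_num]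
    ring
  -- piece B : csc² integral
  have pieceB : ∫ φ in (π/3)..(2*π/3), 1 / Real.sin φ ^ 2 = 2 / Real.sqrt 3 := by
    have hsin' : ∀ φ ∈ Set.uIcc (π/3) (2*π/3), Real.sqrt 3 / 2 ≤ Real.sin φ := by
      intro φ hφ; exact hsin φ (by rwa [Set.uIcc_of_le hab] at hφ)
    have key : ∀ φ ∈ Set.uIcc (π/3) (2*π/3),
        HasDerivAt (fun x => -(Real.cos x / Real.sin x)) (1 / Real.sin φ ^ 2) φ := by
      intro φ hφ
      have hs : Real.sin φ ≠ 0 := ne_of_gt (lt_of_lt_of_le (by positivity) (hsin' φ hφ))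
      have := ((Real.hasDerivAt_cos φ).div (Real.hasDerivAt_sin φ) hs).neg
      refine this.congr_deriv ?_
      rw [← Real.sin_sq_add_cos_sq φ]
      ring
    rw [intervalIntegral.integral_eq_sub_of_hasDerivAt key]
    · have h23 : Real.sin (2*π/3) = Real.sqrt 3 / 2 := by
        rw [show (2*π/3 : ℝ) = π - π/3 by ring, Real.sin_pi_sub, Real.sin_pi_div_three]
      have c23 : Real.cos (2*π/3) = -(1/2) := by
        rw [show (2*π/3 : ℝ) = π - π/3 by ring, Real.cos_pi_sub, Real.cos_pi_div_three]
      rw [h23, c23, Real.cos_pi_div_three, Real.sin_pi_div_three]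
      field_simp
      norm_num
    · apply ContinuousOn.intervalIntegrable
      apply ContinuousOn.div continuousOn_const (by fun_prop)
      intro φ hφ
      exact pow_ne_zero _ (ne_of_gt (lt_of_lt_of_le (by positivity) (hsin' φ hφ)))
  -- integrability for Fubini
  set f : ℝ → ℝ → ℝ := fun r φ => Real.exp (-c * r^2 * Real.sin φ ^ 2) * r^2 * Real.sin φ with hf
  have hg : IntegrableOn (fun r : ℝ => r^2 * Real.exp (-(3*c/4) * r^2)) (Ioi 0) := by
    have := integrableOn_rpow_mul_exp_neg_mul_sq (b := 3*c/4) (by positivity)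
      (s := 2) (by norm_num)
    have heq : ∀ x : ℝ, x ^ (2:ℝ) * Real.exp (-(3*c/4) * x^2)
        = x^2 * Real.exp (-(3*c/4) * x^2) := by
      intro x
      rw [show ((2:ℝ) = ((2:ℕ):ℝ)) by norm_num, Real.rpow_natCast]
    simpa [heq] using this
  have hint : Integrable (Function.uncurry f)
      ((volume.restrict (Ioi (0:ℝ))).prod (volume.restrict (Ioc (π/3) (2*π/3)))) := by
    apply Integrable.mono'
      (g := fun z : ℝ × ℝ => z.1^2 * Real.exp (-(3*c/4) * z.1^2) * 1)
    · exact Integrable.mul_prod hg (integrable_const 1)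
    · exact (Continuous.aestronglyMeasurable (by fun_prop))
    · rw [Measure.prod_restrict]
      filter_upwards [ae_restrict_mem (measurableSet_Ioi.prod measurableSet_Ioc)]
        with z hz
      obtain ⟨hz1, hz2⟩ := hz
      have hs := hsin z.2 ⟨hz2.1.le, hz2.2⟩
      have hs1 : Real.sin z.2 ≤ 1 := Real.sin_le_one _
      have hs0 : 0 ≤ Real.sin z.2 := le_trans (by positivity) hs
      have hsq : (3:ℝ)/4 ≤ Real.sin z.2 ^ 2 := by nlinarith [Real.sq_sqrt (by norm_num : (0:ℝ) ≤ 3)]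
      have hexp : Real.exp (-c * z.1^2 * Real.sin z.2 ^ 2) ≤ Real.exp (-(3*c/4) * z.1^2) := by
        apply Real.exp_le_exp.mpr
        nlinarith [mul_le_mul_of_nonneg_left hsq (by positivity : (0:ℝ) ≤ c * z.1^2)]
      simp only [Function.uncurry, hf, Real.norm_eq_abs, mul_one]
      rw [abs_mul, abs_mul, abs_of_nonneg hs0, abs_of_nonneg (Real.exp_nonneg _),
        abs_of_nonneg (sq_nonneg z.1)]
      calc Real.exp (-c * z.1^2 * Real.sin z.2 ^ 2) * z.1^2 * Real.sin z.2
          ≤ Real.exp (-(3*c/4) * z.1^2) * z.1^2 * 1 := by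
            apply mul_le_mul (mul_le_mul hexp le_rfl (sq_nonneg _) (Real.exp_nonneg _)) hs1 hs0
            positivity
        _ = z.1^2 * Real.exp (-(3*c/4) * z.1^2) := by ring
  -- Fubini swap
  have swap : (∫ r in Ioi (0:ℝ), ∫ φ in (π/3)..(2*π/3), f r φ)
      = ∫ φ in Ioc (π/3) (2*π/3), ∫ r in Ioi (0:ℝ), f r φ := by
    simp_rw [intervalIntegral.integral_of_le hab]
    exact integral_integral_swap hint
  rw [swap]
  -- inner radial integral pointwise
  have inner : ∀ φ ∈ Ioc (π/3) (2*π/3),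
      (∫ r in Ioi (0:ℝ), f r φ)
        = c ^ (-(3:ℝ)/2) * (Real.sqrt π / 4) * (1 / Real.sin φ ^ 2) := by
    intro φ hφ
    have hs : 0 < Real.sin φ := lt_of_lt_of_le (by positivity) (hsin φ ⟨hφ.1.le, hφ.2⟩)
    have hd : 0 < c * Real.sin φ ^ 2 := by positivity
    have e1 : ∀ r : ℝ, f r φ = Real.exp (-(c * Real.sin φ ^ 2) * r^2) * r^2 * Real.sin φ := by
      intro r; simp only [hf]; ring_nf
    simp_rw [e1]
    rw [integral_mul_const, pieceA _ hd, Real.mul_rpow hcpos.le (sq_nonneg _)]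
    have e2 : (Real.sin φ ^ 2) ^ (-(3:ℝ)/2) = (Real.sin φ ^ 3)⁻¹ := by
      rw [← Real.rpow_natCast (Real.sin φ) 2, ← Real.rpow_mul hs.le,
        show ((2:ℕ):ℝ) * (-(3:ℝ)/2) = -(3:ℝ) by norm_num, Real.rpow_neg hs.le,
        show ((3:ℝ) = ((3:ℕ):ℝ)) by norm_num, Real.rpow_natCast]
    rw [e2]
    field_simp
  rw [setIntegral_congr_fun measurableSet_Ioc inner]
  rw [← intervalIntegral.integral_of_le hab, intervalIntegral.integral_const_mul, pieceB]
  -- final algebra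
  have h3' : (0:ℝ) < 3 := by norm_num
  have hs3 : Real.sqrt 3 = (3:ℝ) ^ ((1:ℝ)/2) := by
    rw [Real.sqrt_eq_rpow]
  have hsl : Real.sqrt l = l ^ ((1:ℝ)/2) := by
    rw [Real.sqrt_eq_rpow]
  rw [hc, Real.div_rpow hl.le (Real.sqrt_nonneg 3), hs3, hsl, ← Real.rpow_mul h3'.le]
  have e1 : l * l ^ (-(3:ℝ)/2) = l ^ (-(1:ℝ)/2) := by
    nth_rewrite 1 [← Real.rpow_one l]
    rw [← Real.rpow_add hl]; norm_num
  have e2 : (3:ℝ) ^ ((1:ℝ)/2 * (-(3:ℝ)/2)) * (3:ℝ) ^ ((1:ℝ)/2) = (3:ℝ) ^ (-(1:ℝ)/4) := by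
    rw [← Real.rpow_add h3']; norm_num
  calc l * (l ^ (-(3:ℝ)/2) / (3:ℝ) ^ ((1:ℝ)/2 * (-(3:ℝ)/2)) * (Real.sqrt π / 4) * (2 / (3:ℝ) ^ ((1:ℝ)/2)))
      = (l * l ^ (-(3:ℝ)/2)) * ((3:ℝ) ^ ((1:ℝ)/2 * (-(3:ℝ)/2)) * (3:ℝ) ^ ((1:ℝ)/2))⁻¹ * (Real.sqrt π / 2) := by
        ring
    _ = l ^ (-(1:ℝ)/2) * ((3:ℝ) ^ (-(1:ℝ)/4))⁻¹ * (Real.sqrt π / 2) := by rw [e1, e2]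
    _ = 1 / l ^ ((1:ℝ)/2) * (1/2) * (3:ℝ) ^ ((1:ℝ)/4) * Real.sqrt π := by
        rw [show (-(1:ℝ)/4) = -((1:ℝ)/4) by norm_num, Real.rpow_neg h3'.le, inv_inv,
          show (-(1:ℝ)/2) = -((1:ℝ)/2) by norm_num, Real.rpow_neg hl.le]
        ring
end

section
/- For λ > 0, λ·∫₀^∞ ∫_{π/3}^{2π/3} e^{-(λ/√3)·r²·sin²φ} · r³ dφ dr = 10√3/(9λ). -/
open Real MeasureTheory Set

lemma sin_lb {φ : ℝ} (h1 : π/3 ≤ φ) (h2 : φ ≤ 2*π/3) : Real.sqrt 3 / 2 ≤ Real.sin φ := by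
  have habs : |π/2 - φ| ≤ π/6 := abs_le.2 ⟨by linarith, by linarith⟩
  calc Real.sqrt 3 / 2 = Real.cos (π/6) := (Real.cos_pi_div_six).symm
    _ ≤ Real.cos |π/2 - φ| :=
        Real.cos_le_cos_of_nonneg_of_le_pi (abs_nonneg _) (by linarith [Real.pi_pos]) habs
    _ = Real.cos (π/2 - φ) := Real.cos_abs _
    _ = Real.sin φ := Real.cos_pi_div_two_sub φ

lemma rint {c : ℝ} (hc : 0 < c) :
    ∫ r in Ioi (0:ℝ), Real.exp (-c * r^2) * r^3 = 1/(2*c^2) := by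
  have h := integral_rpow_mul_exp_neg_mul_rpow (p := 2) (q := 3) (b := c) two_pos (by norm_num) hc
  rw [setIntegral_congr_fun measurableSet_Ioi
    (g := fun x : ℝ => x ^ (3:ℝ) * Real.exp (-c * x ^ (2:ℝ)))]
  · rw [h]
    have hg : Real.Gamma ((3+1)/2) = 1 := by norm_num
    rw [hg, mul_one]
    rw [show (-(3+1)/2 : ℝ) = (-2 : ℤ) by norm_num, Real.rpow_intCast]
    rw [zpow_neg]
    norm_num
  · intro x hx
    have h3 : x ^ (3:ℝ) = x ^ (3:ℕ) := Real.rpow_natCast x 3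
    have h2 : x ^ (2:ℝ) = x ^ (2:ℕ) := Real.rpow_natCast x 2
    simp only [h3, h2]
    ring

noncomputable def G (φ : ℝ) : ℝ := -(Real.cos φ / Real.sin φ) - (Real.cos φ / Real.sin φ)^3/3

lemma G_deriv {φ : ℝ} (hs : Real.sin φ ≠ 0) :
    HasDerivAt G ((Real.sin φ ^ 4)⁻¹) φ := by
  have h1 : HasDerivAt Real.sin (Real.cos φ) φ := Real.hasDerivAt_sin φ
  have h2 : HasDerivAt Real.cos (-Real.sin φ) φ := Real.hasDerivAt_cos φ
  have hcot : HasDerivAt (fun x => Real.cos x / Real.sin x)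
      ((-Real.sin φ * Real.sin φ - Real.cos φ * Real.cos φ) / Real.sin φ ^ 2) φ := h2.div h1 hs
  have := (hcot.neg).sub ((hcot.pow 3).div_const 3)
  refine HasDerivAt.congr_deriv (f := G) this ?_
  have hp := Real.sin_sq_add_cos_sq φ
  simp only [Nat.cast_ofNat, show (3-1:ℕ) = 2 from rfl]
  field_simp
  linear_combination (Real.sin φ^2 + Real.cos φ^2 + 1) * hp

lemma phi_int : ∫ φ in (π/3)..(2*π/3), (Real.sin φ ^ 4)⁻¹ = 20 * Real.sqrt 3 / 27 := by
  have hle : π/3 ≤ 2*π/3 := by linarith [Real.pi_pos]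
  have hsin : ∀ x ∈ Set.uIcc (π/3) (2*π/3), Real.sin x ≠ 0 := by
    intro x hx
    rw [Set.uIcc_of_le hle] at hx
    have := Real.sin_pos_of_pos_of_lt_pi (x := x) (by linarith [Real.pi_pos, hx.1])
      (by linarith [Real.pi_pos, hx.2])
    linarith
  have hderiv : ∀ x ∈ Set.uIcc (π/3) (2*π/3), HasDerivAt G ((Real.sin x ^ 4)⁻¹) x :=
    fun x hx => G_deriv (hsin x hx)
  have hint : IntervalIntegrable (fun x => (Real.sin x ^ 4)⁻¹) volume (π/3) (2*π/3) := by
    apply ContinuousOn.intervalIntegrable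
    exact ContinuousOn.inv₀ (by fun_prop) (fun x hx => pow_ne_zero 4 (hsin x hx))
  rw [intervalIntegral.integral_eq_sub_of_hasDerivAt hderiv hint]
  have hs3 : Real.sin (π/3) = Real.sqrt 3 / 2 := Real.sin_pi_div_three
  have hc3 : Real.cos (π/3) = 1/2 := Real.cos_pi_div_three
  have hs23 : Real.sin (2*π/3) = Real.sqrt 3 / 2 := by
    rw [show (2*π/3 : ℝ) = π - π/3 by ring, Real.sin_pi_sub, hs3]
  have hc23 : Real.cos (2*π/3) = -(1/2) := by
    rw [show (2*π/3 : ℝ) = π - π/3 by ring, Real.cos_pi_sub, hc3]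
  have h3 : Real.sqrt 3 ^ 2 = 3 := Real.sq_sqrt (by norm_num)
  have h3ne : Real.sqrt 3 ≠ 0 := by positivity
  unfold G
  rw [hs3, hc3, hs23, hc23]
  field_simp
  linear_combination (-60*Real.sqrt 3^2 - 18) * h3

theorem stmt_6 (l : ℝ) (hl : 0 < l) :
    l * ∫ r in Set.Ioi (0:ℝ), ∫ φ in (π/3)..(2*π/3),
        Real.exp (-(l / Real.sqrt 3) * r^2 * Real.sin φ ^ 2) * r^3
      = 10 * Real.sqrt 3 / (9 * l) := by
  have h3 : Real.sqrt 3 ^ 2 = 3 := Real.sq_sqrt (by norm_num)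
  have h3pos : 0 < Real.sqrt 3 := by positivity
  set a : ℝ := l / Real.sqrt 3 with ha_def
  have ha : 0 < a := div_pos hl h3pos
  have hle : π/3 ≤ 2*π/3 := by linarith [Real.pi_pos]
  set f : ℝ → ℝ → ℝ := fun r φ => Real.exp (-a * r^2 * Real.sin φ ^ 2) * r^3 with hf_def
  set μ := volume.restrict (Ioi (0:ℝ))
  set ν := volume.restrict (Ioc (π/3) (2*π/3))
  -- integrability on the product
  have hb : (0:ℝ) < 3*a/4 := by linarith
  have hbase : IntegrableOn (fun r : ℝ => r^3 * Real.exp (-(3*a/4) * r^2)) (Ioi 0) := by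
    refine (integrableOn_rpow_mul_exp_neg_mul_sq hb (by norm_num : (-1:ℝ) < 3)).congr_fun
      (fun x hx => ?_) measurableSet_Ioi
    beta_reduce
    rw [show (3:ℝ) = ((3:ℕ):ℝ) by norm_num, Real.rpow_natCast]
  have hbound : Integrable (fun z : ℝ × ℝ =>
      (z.1 ^ 3 * Real.exp (-(3*a/4) * z.1^2)) * (1:ℝ)) (μ.prod ν) :=
    Integrable.mul_prod (f := fun r : ℝ => r ^ 3 * Real.exp (-(3*a/4) * r^2))
      (g := fun _ : ℝ => (1:ℝ)) hbase (integrable_const 1)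
  have hmeas : AEStronglyMeasurable (Function.uncurry f) (μ.prod ν) := by
    apply Continuous.aestronglyMeasurable
    simp only [hf_def]
    fun_prop
  have hae : ∀ᵐ z : ℝ × ℝ ∂(μ.prod ν), z ∈ Ioi (0:ℝ) ×ˢ Ioc (π/3) (2*π/3) := by
    simp only [μ, ν]
    rw [Measure.prod_restrict]
    exact ae_restrict_mem (measurableSet_Ioi.prod measurableSet_Ioc)
  have hInt : Integrable (Function.uncurry f) (μ.prod ν) := by
    apply Integrable.mono' hbound hmeas
    filter_upwards [hae] with z hz
    obtain ⟨hz1, hz2⟩ := hz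
    have hr : (0:ℝ) < z.1 := hz1
    have hsφ : Real.sqrt 3 / 2 ≤ Real.sin z.2 := sin_lb (le_of_lt hz2.1) hz2.2
    have hsin2 : (3:ℝ)/4 ≤ Real.sin z.2 ^ 2 := by nlinarith
    have hexp : Real.exp (-a * z.1^2 * Real.sin z.2 ^ 2) ≤ Real.exp (-(3*a/4) * z.1^2) := by
      apply Real.exp_le_exp.2
      have hmul := mul_le_mul_of_nonneg_left hsin2 (show (0:ℝ) ≤ a * z.1^2 by positivity)
      nlinarith [hmul]
    have h0 : Function.uncurry f z = Real.exp (-a * z.1^2 * Real.sin z.2 ^ 2) * z.1^3 := rfl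
    have h1 : ‖Function.uncurry f z‖ = Real.exp (-a * z.1^2 * Real.sin z.2 ^ 2) * z.1^3 := by
      rw [h0, Real.norm_eq_abs, abs_of_nonneg (by positivity)]
    rw [h1, mul_one]
    calc Real.exp (-a * z.1^2 * Real.sin z.2 ^ 2) * z.1^3
        ≤ Real.exp (-(3*a/4) * z.1^2) * z.1^3 := by
          apply mul_le_mul_of_nonneg_right hexp (by positivity)
      _ = z.1 ^ 3 * Real.exp (-(3*a/4) * z.1^2) := by ring
  -- rewrite inner interval integrals as set integrals
  have step1 : (∫ r in Ioi (0:ℝ), ∫ φ in (π/3)..(2*π/3), f r φ)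
      = ∫ r, ∫ φ, f r φ ∂ν ∂μ := by
    refine setIntegral_congr_fun measurableSet_Ioi (fun r _ => ?_)
    exact intervalIntegral.integral_of_le hle
  have step2 : (∫ r, ∫ φ, f r φ ∂ν ∂μ) = ∫ φ, ∫ r, f r φ ∂μ ∂ν :=
    integral_integral_swap hInt
  have step3 : (∫ φ, ∫ r, f r φ ∂μ ∂ν)
      = ∫ φ in Ioc (π/3) (2*π/3), 3/(2*l^2) * (Real.sin φ ^ 4)⁻¹ := by
    refine setIntegral_congr_fun measurableSet_Ioc (fun φ hφ => ?_)
    have hsφ : Real.sqrt 3 / 2 ≤ Real.sin φ := sin_lb (le_of_lt hφ.1) hφ.2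
    have hsne : Real.sin φ ≠ 0 := by nlinarith
    have hc : 0 < a * Real.sin φ ^ 2 := by positivity
    have heq : ∀ r : ℝ, f r φ = Real.exp (-(a * Real.sin φ ^ 2) * r^2) * r^3 := by
      intro r; simp only [hf_def]; ring_nf
    simp_rw [heq]
    rw [rint hc]
    have hl' : l ≠ 0 := ne_of_gt hl
    rw [ha_def]
    field_simp
    ring
    exact h3
  have step4 : (∫ φ in Ioc (π/3) (2*π/3), 3/(2*l^2) * (Real.sin φ ^ 4)⁻¹)
      = 3/(2*l^2) * (20 * Real.sqrt 3 / 27) := by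
    rw [← intervalIntegral.integral_of_le hle, intervalIntegral.integral_const_mul, phi_int]
  rw [show (∫ r in Set.Ioi (0:ℝ), ∫ φ in (π/3)..(2*π/3),
        Real.exp (-(l / Real.sqrt 3) * r^2 * Real.sin φ ^ 2) * r^3)
      = ∫ r in Ioi (0:ℝ), ∫ φ in (π/3)..(2*π/3), f r φ from rfl]
  rw [step1, step2, step3, step4]
  have hl' : l ≠ 0 := ne_of_gt hl
  field_simp
  ring
end

section
/- ∫₀¹ ∫₀¹ √(u² + v² − u·v) dv du = 1/3 + (ln 3)/4. -/
open Real intervalIntegral MeasureTheory Set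

noncomputable def Sq (u : ℝ) : ℝ := Real.sqrt (u^2 - u + 1)

lemma Sq_pos (u : ℝ) : 0 < Sq u := Real.sqrt_pos.2 (by nlinarith [sq_nonneg (2*u-1)])

lemma Sq_sq (u : ℝ) : (Sq u)^2 = u^2 - u + 1 :=
  Real.sq_sqrt (by nlinarith [sq_nonneg (2*u-1)])

lemma Sq_cont : Continuous Sq := Real.continuous_sqrt.comp (by continuity)

lemma hasDerivAt_Sq (u : ℝ) : HasDerivAt Sq ((2*u-1)/(2*Sq u)) u := by
  have hp : HasDerivAt (fun u : ℝ => u^2 - u + 1) (2*u-1) u := by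
    simpa using ((hasDerivAt_pow 2 u).sub (hasDerivAt_id u)).add_const 1
  have h := (Real.hasDerivAt_sqrt (by nlinarith [sq_nonneg (2*u-1)] : u^2-u+1 ≠ 0)).comp u hp
  refine h.congr_deriv (Eq.symm ?_)
  field_simp [Sq]
  simp only [Sq]
  ring_nf

lemma w1_pos (u : ℝ) : 0 < 2*u - 1 + 2*Sq u := by
  nlinarith [Sq_pos u, Sq_sq u, sq_nonneg (2*Sq u + (2*u-1))]

lemma w2_pos (u : ℝ) : 0 < 2 - u + 2*Sq u := by
  nlinarith [Sq_pos u, Sq_sq u, sq_nonneg (2*Sq u + (2-u)), sq_nonneg u]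

noncomputable def Iu (u : ℝ) : ℝ :=
  (2 - u) * Sq u / 4 + u^2/4 + 3/8 * u^2 * (Real.log (2 - u + 2 * Sq u) - Real.log u)

lemma Iu_cont : Continuous Iu := by
  have h : Iu = fun u => (2 - u) * Sq u / 4 + u^2/4 + 3/8 * u^2 * Real.log (2 - u + 2 * Sq u)
      - 3/8 * (u * (u * Real.log u)) := by
    funext u; unfold Iu; ring
  rw [h]
  have hlog : Continuous fun u => Real.log (2 - u + 2 * Sq u) := by
    apply Continuous.log
    · exact (continuous_const.sub continuous_id).add (continuous_const.mul Sq_cont)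
    · exact fun u => (w2_pos u).ne'
  apply Continuous.sub
  · apply Continuous.add
    · apply Continuous.add
      · exact ((continuous_const.sub continuous_id).mul Sq_cont).div_const 4
      · exact (continuous_pow 2).div_const 4
    · exact (continuous_const.mul (continuous_pow 2)).mul hlog
  · exact continuous_const.mul (continuous_id.mul Real.continuous_mul_log)

theorem inner_int (u : ℝ) (hu : 0 < u) :
    ∫ v in (0:ℝ)..1, Real.sqrt (u^2 + v^2 - u*v) = Iu u := by
  set G : ℝ → ℝ := fun v => (2*v - u) * Real.sqrt (u^2 + v^2 - u*v) / 4
      + 3*u^2/8 * Real.log (2*v - u + 2*Real.sqrt (u^2 + v^2 - u*v)) with hG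
  have key : ∀ v : ℝ, HasDerivAt G (Real.sqrt (u^2 + v^2 - u*v)) v := by
    intro v
    have hPpos : 0 < u^2 + v^2 - u*v := by nlinarith [sq_nonneg (2*v - u)]
    set t := Real.sqrt (u^2 + v^2 - u*v) with htdef
    have htpos : 0 < t := Real.sqrt_pos.2 hPpos
    have ht2 : t^2 = u^2 + v^2 - u*v := Real.sq_sqrt hPpos.le
    have hwpos : 0 < 2*v - u + 2*t := by nlinarith [sq_nonneg (2*t + (2*v - u))]
    have hP : HasDerivAt (fun v : ℝ => u^2 + v^2 - u*v) (2*v - u) v := by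
      exact (((hasDerivAt_pow 2 v).const_add (u^2)).sub ((hasDerivAt_id v).const_mul u)).congr_deriv (by ring)
    have ht : HasDerivAt (fun v => Real.sqrt (u^2 + v^2 - u*v)) ((2*v - u)/(2*t)) v := by
      have h := (Real.hasDerivAt_sqrt hPpos.ne').comp v hP
      refine h.congr_deriv (Eq.symm ?_)
      field_simp
      rw [mul_comm v u, ← htdef, mul_div_assoc, div_self htpos.ne', mul_one]
    have h2v : HasDerivAt (fun v : ℝ => 2*v - u) 2 v := by
      simpa using ((hasDerivAt_id v).const_mul 2).sub_const u
    have hA : HasDerivAt (fun v => (2*v - u) * Real.sqrt (u^2 + v^2 - u*v) / 4)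
        ((2 * t + (2*v - u) * ((2*v - u)/(2*t)))/4) v := (h2v.mul ht).div_const 4
    have hw : HasDerivAt (fun v => 2*v - u + 2*Real.sqrt (u^2 + v^2 - u*v))
        (2 + 2*((2*v - u)/(2*t))) v := h2v.add (ht.const_mul 2)
    have hB : HasDerivAt (fun v => 3*u^2/8 * Real.log (2*v - u + 2*Real.sqrt (u^2 + v^2 - u*v)))
        (3*u^2/8 * ((2 + 2*((2*v - u)/(2*t)))/(2*v - u + 2*t))) v :=
      (hw.log hwpos.ne').const_mul (3*u^2/8)
    have := hA.add hB
    refine this.congr_deriv (Eq.symm ?_)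
    rw [eq_comm]
    field_simp
    ring_nf
    linear_combination (-64*t - 64*v + 32*u) * ht2
  rw [intervalIntegral.integral_eq_sub_of_hasDerivAt (fun v _ => key v)
    (by apply Continuous.intervalIntegrable; fun_prop)]
  have e0 : (u:ℝ)^2 + 0^2 - u*0 = u^2 := by ring
  have e1 : (u:ℝ)^2 + 1^2 - u*1 = u^2 - u + 1 := by ring
  simp only [hG, e0, e1, Real.sqrt_sq hu.le]
  have e2 : 2*(0:ℝ) - u + 2*u = u := by ring
  have e3 : 2*(1:ℝ) - u + 2*Real.sqrt (u^2-u+1) = 2 - u + 2*Sq u := by rw [Sq]; ring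
  rw [e2, e3]
  unfold Iu Sq
  ring

theorem inner_int0 : ∫ v in (0:ℝ)..1, Real.sqrt ((0:ℝ)^2 + v^2 - 0*v) = Iu 0 := by
  have h : ∀ v ∈ Set.uIcc (0:ℝ) 1, Real.sqrt ((0:ℝ)^2 + v^2 - 0*v) = v := by
    intro v hv
    rw [Set.uIcc_of_le (by norm_num)] at hv
    rw [show (0:ℝ)^2 + v^2 - 0*v = v^2 by ring, Real.sqrt_sq hv.1]
  rw [intervalIntegral.integral_congr h]
  have hS0 : Sq 0 = 1 := by rw [Sq]; norm_num
  simp [Iu, hS0]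
  norm_num

noncomputable def Hh (u : ℝ) : ℝ :=
  u * Sq u / 4 + Real.log (2*u - 1 + 2*Sq u) / 8 - (Sq u)^3/12 + u^3/12
    + u^3/8 * Real.log (2 - u + 2*Sq u) - u^2 * (u * Real.log u) / 8

lemma Hh_cont : Continuous Hh := by
  unfold Hh
  have hl1 : Continuous fun u => Real.log (2*u - 1 + 2*Sq u) := by
    apply Continuous.log
    · exact ((continuous_const.mul continuous_id).sub continuous_const).add
        (continuous_const.mul Sq_cont)
    · exact fun u => (w1_pos u).ne'
  have hl2 : Continuous fun u => Real.log (2 - u + 2*Sq u) := by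
    apply Continuous.log
    · exact (continuous_const.sub continuous_id).add (continuous_const.mul Sq_cont)
    · exact fun u => (w2_pos u).ne'
  apply Continuous.sub
  · apply Continuous.add
    · apply Continuous.add
      · apply Continuous.sub
        · exact ((continuous_id.mul Sq_cont).div_const 4).add (hl1.div_const 8)
        · exact (Sq_cont.pow 3).div_const 12
      · exact (continuous_pow 3).div_const 12
    · exact ((continuous_pow 3).div_const 8).mul hl2
  · exact ((continuous_pow 2).mul Real.continuous_mul_log).div_const 8

lemma hasDerivAt_Hh (u : ℝ) (hu : 0 < u) : HasDerivAt Hh (Iu u) u := by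
  have hS := hasDerivAt_Sq u
  have hSpos := Sq_pos u
  have hS2 := Sq_sq u
  have hw1 := w1_pos u
  have hw2 := w2_pos u
  set S := Sq u with hSdef
  have h1 : HasDerivAt (fun u => u * Sq u / 4) ((1 * S + u * ((2*u-1)/(2*S)))/4) u :=
    ((hasDerivAt_id u).mul hS).div_const 4
  have hw1d : HasDerivAt (fun u => 2*u - 1 + 2*Sq u) (2 + 2*((2*u-1)/(2*S))) u := by
    have := (((hasDerivAt_id u).const_mul 2).sub_const 1).add (hS.const_mul 2)
    exact this.congr_deriv (by ring)
  have h2 : HasDerivAt (fun u => Real.log (2*u - 1 + 2*Sq u))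
      ((2 + 2*((2*u-1)/(2*S)))/(2*u - 1 + 2*S)) u := hw1d.log hw1.ne'
  have h3 : HasDerivAt (fun u => (Sq u)^3) (3*S^2*((2*u-1)/(2*S))) u := by
    have := hS.pow 3
    exact this.congr_deriv (by rw [← hSdef]; norm_num)
  have h4 : HasDerivAt (fun u : ℝ => u^3) (3*u^2) u := by simpa using hasDerivAt_pow 3 u
  have hSne : S ≠ 0 := hSpos.ne'
  have h1' : HasDerivAt (fun u => u * Sq u / 4) ((2*S^2 + u*(2*u-1))/(8*S)) u := by
    convert h1 using 1
    field_simp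
    ring
  have h2' : HasDerivAt (fun u => Real.log (2*u - 1 + 2*Sq u) / 8) (1/(8*S)) u := by
    refine (h2.div_const 8).congr_deriv (Eq.symm ?_)
    rw [eq_comm]
    field_simp
    ring
  have h3' : HasDerivAt (fun u => (Sq u)^3/12) (S*(2*u-1)/8) u := by
    refine (h3.div_const 12).congr_deriv (Eq.symm ?_)
    rw [eq_comm]
    field_simp
    ring
  have hw2d : HasDerivAt (fun u => 2 - u + 2*Sq u) (-1 + 2*((2*u-1)/(2*S))) u := by
    have a1 : HasDerivAt (fun u : ℝ => 2 - u) (-1) u := by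
      simpa using (hasDerivAt_id u).const_sub 2
    exact a1.add (hS.const_mul 2)
  have h5' : HasDerivAt (fun u => u^3/8 * Real.log (2 - u + 2*Sq u))
      ((3*u^2)/8 * Real.log (2 - u + 2*S) + (u^2/8 - u^2/(8*S))) u := by
    have := (h4.div_const 8).mul (hw2d.log hw2.ne')
    refine this.congr_deriv (Eq.symm ?_)
    have key : u^3/8 * ((-1 + 2*((2*u-1)/(2*S)))/(2 - u + 2*S)) = u^2/8 - u^2/(8*S) := by
      field_simp
      ring_nf
      linear_combination (-2) * hS2
    rw [← key]
  have h6' : HasDerivAt (fun u => u^2 * (u * Real.log u) / 8)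
      ((3*u^2*Real.log u + u^2)/8) u := by
    have := ((hasDerivAt_pow 2 u).mul (Real.hasDerivAt_mul_log hu.ne')).div_const 8
    refine this.congr_deriv (Eq.symm ?_)
    ring
  have hsum := ((((h1'.add h2').sub h3').add (h4.div_const 12)).add h5').sub h6'
  have hfun : Hh = fun u => u * Sq u / 4 + Real.log (2*u - 1 + 2*Sq u) / 8 - (Sq u)^3/12 + u^3/12
      + u^3/8 * Real.log (2 - u + 2*Sq u) - u^2 * (u * Real.log u) / 8 := rfl
  rw [hfun]
  refine hsum.congr_deriv (Eq.symm ?_)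
  rw [eq_comm]
  unfold Iu
  rw [← hSdef]
  field_simp
  ring_nf
  linear_combination (-48) * hS2

theorem stmt_10 :
    ∫ u in (0:ℝ)..1, ∫ v in (0:ℝ)..1, Real.sqrt (u^2 + v^2 - u*v)
      = 1/3 + Real.log 3 / 4 := by
  have step1 : ∀ u ∈ Set.uIcc (0:ℝ) 1,
      (fun u => ∫ v in (0:ℝ)..1, Real.sqrt (u^2 + v^2 - u*v)) u = Iu u := by
    intro u hu
    rw [Set.uIcc_of_le (by norm_num)] at hu
    rcases eq_or_lt_of_le hu.1 with h | h
    · simp only [← h]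
      exact inner_int0
    · exact inner_int u h
  rw [intervalIntegral.integral_congr step1]
  rw [intervalIntegral.integral_eq_sub_of_hasDeriv_right_of_le (by norm_num)
      Hh_cont.continuousOn (fun x hx => (hasDerivAt_Hh x hx.1).hasDerivWithinAt)
      (Iu_cont.intervalIntegrable _ _)]
  have hS1 : Sq 1 = 1 := by rw [Sq]; norm_num
  have hS0 : Sq 0 = 1 := by rw [Sq]; norm_num
  unfold Hh
  rw [hS1, hS0]
  norm_num
  ring
end
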